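/- Let b : ℝ → ℝ be twice differentiable and suppose there are constants 0 < L_b ≤ U_b with L_b ≤ b''(z) ≤ U_b for all z ∈ ℝ, and fix A₁, A₂, A₃ ≥ 0. Then there exists a constant E > 0, depending only on b(0), b'(0), L_b, U_b, A₁, A₂, A₃, such that for every integer t ≥ 3 and all sequences f_1,…,f_t ∈ ℝ and r_1,…,r_t ∈ ℝ satisfying (i) ∑_{s=1}^t ( b(f_s) − r_s·f_s ) ≤ A₁·t·√(log t), (ii) |∑_{s=1}^t r_s| ≤ A₂·t·√(log t), and (iii) ∑_{s=1}^t r_s² ≤ A₃·t·log t, one has ∑_{s=1}^t |b'(f_s)| ≤ E·t·√(log t). -/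

import Mathlib

/-- Strong convexity lower bound from `Lb ≤ b''`. -/
lemma conv_lb {b : ℝ → ℝ} {Lb : ℝ} (hb : Differentiable ℝ b) (hb' : Differentiable ℝ (deriv b))
    (hL : ∀ z, Lb ≤ deriv (deriv b) z) (x : ℝ) :
    b 0 + deriv b 0 * x + Lb / 2 * x ^ 2 ≤ b x := by
  set g : ℝ → ℝ := fun y => b y - (b 0 + deriv b 0 * y + Lb / 2 * y ^ 2) with hg
  have hder : ∀ y, HasDerivAt g (deriv b y - (deriv b 0 + Lb * y)) y := by
    intro y
    have h1 : HasDerivAt b (deriv b y) y := (hb y).hasDerivAt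
    have h2 : HasDerivAt (fun z : ℝ => b 0 + deriv b 0 * z + Lb / 2 * z ^ 2)
        (deriv b 0 + Lb * y) y := by
      have hp : HasDerivAt (fun z : ℝ => z ^ 2) (2 * y) y := by
        simpa using hasDerivAt_pow 2 y
      have := (((hasDerivAt_id y).const_mul (deriv b 0)).const_add (b 0)).add
        (hp.const_mul (Lb / 2))
      rw [show deriv b 0 + Lb * y = deriv b 0 * 1 + Lb / 2 * (2 * y) by ring]
      exact this
    exact h1.sub h2
  have hgdiff : Differentiable ℝ g := fun y => (hder y).differentiableAt
  have hdg : deriv g = fun y => deriv b y - (deriv b 0 + Lb * y) := by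
    funext y; exact (hder y).deriv
  have hder2 : ∀ y, HasDerivAt (deriv g) (deriv (deriv b) y - Lb) y := by
    intro y
    rw [hdg]
    have h2 : HasDerivAt (fun z : ℝ => deriv b 0 + Lb * z) Lb y := by
      simpa using ((hasDerivAt_id y).const_mul Lb).const_add (deriv b 0)
    exact (hb' y).hasDerivAt.sub h2
  have hmono : Monotone (deriv g) := by
    apply monotone_of_deriv_nonneg (fun y => (hder2 y).differentiableAt)
    intro y
    rw [(hder2 y).deriv]
    linarith [hL y]
  have hdg0 : deriv g 0 = 0 := by rw [hdg]; simp
  have hkey : 0 ≤ g x := by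
    rcases le_total 0 x with hx | hx
    · have hm : MonotoneOn g (Set.Ici (0:ℝ)) := by
        apply monotoneOn_of_deriv_nonneg (convex_Ici 0) hgdiff.continuous.continuousOn
          hgdiff.differentiableOn
        intro y hy
        rw [interior_Ici] at hy
        rw [← hdg0]; exact hmono (le_of_lt hy)
      have := hm Set.self_mem_Ici hx hx
      simpa [hg] using this
    · have hm : AntitoneOn g (Set.Iic (0:ℝ)) := by
        apply antitoneOn_of_deriv_nonpos (convex_Iic 0) hgdiff.continuous.continuousOn
          hgdiff.differentiableOn
        intro y hy
        rw [interior_Iic] at hy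
        rw [← hdg0]; exact hmono (le_of_lt hy)
      have := hm hx Set.self_mem_Iic hx
      simpa [hg] using this
  simp only [hg] at hkey
  linarith

/-- Lipschitz bound on `b'` from `|b''| ≤ Ub`. -/
lemma lip_b' {b : ℝ → ℝ} {Lb Ub : ℝ} (hLb : 0 < Lb) (hb' : Differentiable ℝ (deriv b))
    (hL : ∀ z, Lb ≤ deriv (deriv b) z) (hU : ∀ z, deriv (deriv b) z ≤ Ub) (x : ℝ) :
    |deriv b x - deriv b 0| ≤ Ub * |x| := by
  have := Convex.norm_image_sub_le_of_norm_deriv_le (f := deriv b) (s := Set.univ)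
    (fun y _ => hb' y)
    (fun y _ => by
      rw [Real.norm_eq_abs, abs_le]
      have h1 := hL y; have h2 := hU y
      constructor <;> linarith)
    convex_univ (Set.mem_univ 0) (Set.mem_univ x)
  simpa using this

set_option maxHeartbeats 1000000 in
/-- a bound ∑ |b'(f_s)| ≤ E·t·√(log t) with a constant E depending only on
b(0), b'(0), L_b, U_b, A₁, A₂, A₃, valid whenever the surrogate negative log-likelihood is
at most A₁·t·√(log t), |∑ r_s| ≤ A₂·t·√(log t) and ∑ r_s² ≤ A₃·t·log t. -/
theorem stmt6 (b0 db0 Lb Ub A₁ A₂ A₃ : ℝ) (hLb : 0 < Lb) (hLU : Lb ≤ Ub)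
    (hA₁ : 0 ≤ A₁) (hA₂ : 0 ≤ A₂) (hA₃ : 0 ≤ A₃) :
    ∃ E : ℝ, 0 < E ∧
      ∀ b : ℝ → ℝ, Differentiable ℝ b → Differentiable ℝ (deriv b) →
        (∀ z : ℝ, Lb ≤ deriv (deriv b) z) → (∀ z : ℝ, deriv (deriv b) z ≤ Ub) →
        b 0 = b0 → deriv b 0 = db0 →
        ∀ t : ℕ, 3 ≤ t → ∀ f r : Fin t → ℝ,
          (∑ s, (b (f s) - r s * f s) ≤ A₁ * (t : ℝ) * Real.sqrt (Real.log (t : ℝ))) →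
          (|∑ s, r s| ≤ A₂ * (t : ℝ) * Real.sqrt (Real.log (t : ℝ))) →
          (∑ s, (r s) ^ 2 ≤ A₃ * (t : ℝ) * Real.log (t : ℝ)) →
          ∑ s, |deriv b (f s)| ≤ E * (t : ℝ) * Real.sqrt (Real.log (t : ℝ)) := by
  have hUb : 0 < Ub := lt_of_lt_of_le hLb hLU
  set C₂ : ℝ := 4 * (A₁ + |b0| + (2 * A₃ + 2 * db0 ^ 2) / Lb) / Lb with hC₂def
  have hC₂0 : 0 ≤ C₂ := by rw [hC₂def]; positivity
  clear_value C₂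
  refine ⟨|db0| + Ub * Real.sqrt C₂ + 1, by positivity, ?_⟩
  intro b hb hb' hL hU hb0 hdb0 t ht f r h1 h2 h3
  set T := (t : ℝ) with hTdef
  have hT3 : (3 : ℝ) ≤ T := by rw [hTdef]; exact_mod_cast ht
  have hT0 : (0 : ℝ) < T := by linarith
  set Lg := Real.log T with hLgdef
  clear_value T
  have hL1 : 1 ≤ Lg := by
    rw [hLgdef]
    have he : Real.exp 1 ≤ T := by
      have := Real.exp_one_lt_d9
      linarith
    calc (1 : ℝ) = Real.log (Real.exp 1) := (Real.log_exp 1).symm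
      _ ≤ Real.log T := Real.log_le_log (Real.exp_pos 1) he
  have hL0 : (0 : ℝ) ≤ Lg := by linarith
  have hsL1 : 1 ≤ Real.sqrt Lg := by
    have := Real.sqrt_le_sqrt hL1
    simpa using this
  have hsL0 : (0 : ℝ) ≤ Real.sqrt Lg := Real.sqrt_nonneg _
  have hsLsq : Real.sqrt Lg ^ 2 = Lg := Real.sq_sqrt hL0
  have hsLL : Real.sqrt Lg ≤ Lg := by
    have h := mul_le_mul_of_nonneg_right hsL1 hsL0
    rw [← hsLsq, sq]
    simpa using h
  set Q := ∑ s, (f s) ^ 2 with hQdef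
  have hQ0 : (0 : ℝ) ≤ Q := Finset.sum_nonneg fun s _ => sq_nonneg _
  clear_value Lg
  -- strong convexity lower bound on the sum
  have hlb : ∀ s : Fin t, b0 + db0 * f s + Lb / 2 * (f s) ^ 2 ≤ b (f s) := by
    intro s
    have := conv_lb hb hb' hL (f s)
    rwa [hb0, hdb0] at this
  have hexp : ∑ s : Fin t, (b0 + db0 * f s + Lb / 2 * (f s) ^ 2)
      = T * b0 + db0 * (∑ s, f s) + Lb / 2 * Q := by
    rw [Finset.sum_add_distrib, Finset.sum_add_distrib, Finset.sum_const, ← Finset.mul_sum,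
      ← Finset.mul_sum, Finset.card_univ, Fintype.card_fin, nsmul_eq_mul, hQdef, hTdef]
  have hsumlb : T * b0 + db0 * (∑ s, f s) + Lb / 2 * Q ≤ ∑ s, b (f s) := by
    rw [← hexp]
    exact Finset.sum_le_sum fun s _ => hlb s
  have hsplit : ∑ s, b (f s) = ∑ s, (b (f s) - r s * f s) + ∑ s, r s * f s := by
    rw [← Finset.sum_add_distrib]; simp
  set X := ∑ s, (r s - db0) * f s with hXdef
  have hXrw : X = ∑ s, r s * f s - db0 * ∑ s, f s := by
    rw [hXdef, Finset.mul_sum, ← Finset.sum_sub_distrib]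
    congr 1; funext s; ring
  clear_value X
  have hmain : Lb / 2 * Q ≤ A₁ * T * Real.sqrt Lg - T * b0 + X := by
    rw [hsplit] at hsumlb
    rw [hXrw]
    linarith only [hsumlb, h1]
  -- Cauchy-Schwarz
  have hCS : X ^ 2 ≤ (∑ s, (r s - db0) ^ 2) * Q := by
    rw [hXdef, hQdef]
    exact Finset.sum_mul_sq_le_sq_mul_sq Finset.univ (fun s => r s - db0) f
  set M2 := (2 * A₃ + 2 * db0 ^ 2) * (T * Lg) with hM2def
  have hM20 : (0 : ℝ) ≤ M2 := by rw [hM2def]; positivity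
  have hM2 : ∑ s, (r s - db0) ^ 2 ≤ M2 := by
    have hterm : ∀ s : Fin t, (r s - db0) ^ 2 ≤ 2 * (r s) ^ 2 + 2 * db0 ^ 2 := by
      intro s; linarith only [sq_nonneg (r s + db0)]
    have h : ∑ s, (r s - db0) ^ 2 ≤ ∑ s : Fin t, (2 * (r s) ^ 2 + 2 * db0 ^ 2) :=
      Finset.sum_le_sum fun s _ => hterm s
    have hsum2 : ∑ s : Fin t, (2 * (r s) ^ 2 + 2 * db0 ^ 2)
        = 2 * (∑ s, (r s) ^ 2) + T * (2 * db0 ^ 2) := by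
      rw [Finset.sum_add_distrib, Finset.sum_const, ← Finset.mul_sum, Finset.card_univ,
        Fintype.card_fin, nsmul_eq_mul, hTdef]
    rw [hsum2] at h
    have hdb : T * (2 * db0 ^ 2) ≤ 2 * db0 ^ 2 * (T * Lg) := by
      linarith only [mul_nonneg (mul_nonneg (sq_nonneg db0) hT0.le) (sub_nonneg.mpr hL1)]
    rw [hM2def]
    linarith
  clear_value M2
  have hQv := hQdef
  clear_value Q
  have hXle : X ≤ Real.sqrt M2 * Real.sqrt Q := by
    have h1 : X ≤ Real.sqrt (M2 * Q) := by
      calc X ≤ |X| := le_abs_self X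
        _ = Real.sqrt (X ^ 2) := (Real.sqrt_sq_eq_abs X).symm
        _ ≤ Real.sqrt (M2 * Q) := Real.sqrt_le_sqrt
            (le_trans hCS (mul_le_mul_of_nonneg_right hM2 hQ0))
    rwa [Real.sqrt_mul hM20] at h1
  have ha2 : Real.sqrt M2 ^ 2 = M2 := Real.sq_sqrt hM20
  have hc2 : Real.sqrt Q ^ 2 = Q := Real.sq_sqrt hQ0
  have hAM : Lb * (Real.sqrt M2 * Real.sqrt Q)
      ≤ Real.sqrt M2 ^ 2 + Lb ^ 2 / 4 * Real.sqrt Q ^ 2 := by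
    linarith only [sq_nonneg (2 * Real.sqrt M2 - Lb * Real.sqrt Q)]
  rw [ha2, hc2] at hAM
  -- combine to bound Q
  have hchain : Lb / 2 * Q ≤ A₁ * T * Real.sqrt Lg + T * |b0| + Real.sqrt M2 * Real.sqrt Q := by
    have hb0' : -(T * b0) ≤ T * |b0| := by
      have h := mul_le_mul_of_nonneg_left (neg_le_abs b0) hT0.le
      linarith only [h]
    linarith only [hXle, hmain, hb0']
  have key : Lb ^ 2 / 4 * Q ≤ (Lb * (A₁ + |b0|) + (2 * A₃ + 2 * db0 ^ 2)) * (T * Lg) := by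
    have hm := mul_le_mul_of_nonneg_left hchain hLb.le
    have e1 : Lb * (A₁ * T * Real.sqrt Lg) ≤ Lb * A₁ * (T * Lg) := by
      linarith only [mul_nonneg (mul_nonneg (mul_nonneg hLb.le hA₁) hT0.le)
        (sub_nonneg.mpr hsLL)]
    have e2 : Lb * (T * |b0|) ≤ Lb * |b0| * (T * Lg) := by
      linarith only [mul_nonneg (mul_nonneg (mul_nonneg hLb.le hT0.le) (abs_nonneg b0))
        (sub_nonneg.mpr hL1)]
    linarith only [hm, hAM, e1, e2, hM2def]
  have hQle : Q ≤ C₂ * (T * Lg) := by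
    have hrw : C₂ * (T * Lg) = 4 * (Lb * (A₁ + |b0|) + (2 * A₃ + 2 * db0 ^ 2)) * (T * Lg) / Lb ^ 2 := by
      rw [hC₂def]; field_simp
    rw [hrw, le_div_iff₀ (by positivity : (0 : ℝ) < Lb ^ 2)]
    linarith only [key]
  -- bound sum of |f|
  set S1 := ∑ s, |f s| with hS1def
  have hS10 : (0 : ℝ) ≤ S1 := Finset.sum_nonneg fun s _ => abs_nonneg _
  clear_value S1
  have hS1sq : S1 ^ 2 ≤ T * Q := by
    have h := Finset.sum_mul_sq_le_sq_mul_sq Finset.univ (fun _ : Fin t => (1 : ℝ)) (fun s => |f s|)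
    simp only [one_mul, one_pow, Finset.sum_const, Finset.card_univ, Fintype.card_fin,
      nsmul_eq_mul, mul_one, sq_abs] at h
    rw [hS1def, hQdef, hTdef]
    exact h
  have hS1le : S1 ≤ Real.sqrt C₂ * T * Real.sqrt Lg := by
    have h1 : S1 ≤ Real.sqrt (C₂ * T ^ 2 * Lg) := by
      calc S1 = Real.sqrt (S1 ^ 2) := (Real.sqrt_sq hS10).symm
        _ ≤ Real.sqrt (C₂ * T ^ 2 * Lg) := by
            apply Real.sqrt_le_sqrt
            linarith only [hS1sq, mul_le_mul_of_nonneg_left hQle hT0.le]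
    rwa [show C₂ * T ^ 2 * Lg = C₂ * (T ^ 2 * Lg) by ring, Real.sqrt_mul hC₂0,
      Real.sqrt_mul (by positivity), Real.sqrt_sq hT0.le, ← mul_assoc] at h1
  -- conclude
  have hterm : ∀ s : Fin t, |deriv b (f s)| ≤ |db0| + Ub * |f s| := by
    intro s
    have hlip := lip_b' hLb hb' hL hU (f s)
    rw [hdb0] at hlip
    calc |deriv b (f s)| = |deriv b (f s) - db0 + db0| := by ring_nf
      _ ≤ |deriv b (f s) - db0| + |db0| := abs_add_le _ _
      _ ≤ |db0| + Ub * |f s| := by linarith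
  have hfinsum : ∑ s : Fin t, (|db0| + Ub * |f s|) = T * |db0| + Ub * S1 := by
    rw [Finset.sum_add_distrib, Finset.sum_const, ← Finset.mul_sum, Finset.card_univ,
      Fintype.card_fin, nsmul_eq_mul, hS1def, hTdef]
  calc ∑ s, |deriv b (f s)| ≤ ∑ s : Fin t, (|db0| + Ub * |f s|) :=
        Finset.sum_le_sum fun s _ => hterm s
    _ = T * |db0| + Ub * S1 := hfinsum
    _ ≤ (|db0| + Ub * Real.sqrt C₂ + 1) * T * Real.sqrt Lg := by
        have e4 : T * |db0| ≤ |db0| * T * Real.sqrt Lg := by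
          linarith only [mul_nonneg (mul_nonneg (abs_nonneg db0) hT0.le)
            (sub_nonneg.mpr hsL1)]
        have e5 : Ub * S1 ≤ Ub * (Real.sqrt C₂ * T * Real.sqrt Lg) :=
          mul_le_mul_of_nonneg_left hS1le hUb.le
        linarith only [e4, e5, (mul_pos hT0 (lt_of_lt_of_le one_pos hsL1)).le]
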